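/- Let G be a finite group, Γ = Pow(G), and let v ∈ G be a nontrivial p-power element (o(v) = p^i, i ≥ 1, p prime) that is not a CC-generator. Suppose every u ∈ N_Γ[v] with o(u) > o(v) that is a closed-twin of v in Γ_v = Γ[N_Γ[v]] satisfies deg_Γ(u) ≤ deg_Γ(v). Let y be a closed-twin of v in Γ_v of maximum order among all closed-twins of v in Γ_v. If o(y) = p^j with j ≥ 2, then p divides the cardinality of N_Γ[v]. -/

import Mathlib

/-- The power graph of a group `G`: distinct `x` and `y` are adjacent iff
`x ∈ ⟨y⟩` or `y ∈ ⟨x⟩`. -/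
def powGraph (G : Type*) [Group G] : SimpleGraph G where
  Adj x y := x ≠ y ∧ (x ∈ Subgroup.zpowers y ∨ y ∈ Subgroup.zpowers x)
  symm := by
    constructor
    rintro x y ⟨hne, h⟩
    exact ⟨hne.symm, h.symm⟩
  loopless := by
    constructor
    rintro x ⟨hne, -⟩
    exact hne rfl

/-- The closed neighborhood of a vertex in a simple graph. -/
def closedNbhd {V : Type*} (X : SimpleGraph V) (v : V) : Set V :=
  insert v (X.neighborSet v)

theorem self_mem_closedNbhd {V : Type*} (X : SimpleGraph V) (v : V) :
    v ∈ closedNbhd X v := Set.mem_insert v _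

/-- `Γ_v`: the subgraph of the power graph induced on the closed neighborhood of `v`. -/
def powLocal (G : Type*) [Group G] (v : G) :
    SimpleGraph (closedNbhd (powGraph G) v) :=
  SimpleGraph.induce (closedNbhd (powGraph G) v) (powGraph G)

/-- `v` is a CC-generator: `⟨v⟩` is not properly contained in any cyclic subgroup,
i.e. `v ∈ ⟨g⟩` implies `⟨g⟩ = ⟨v⟩`. -/
def IsCCGenerator {G : Type*} [Group G] (v : G) : Prop :=
  ∀ g : G, v ∈ Subgroup.zpowers g → Subgroup.zpowers g = Subgroup.zpowers v

open Subgroup Finset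

lemma isCyclic_zpowers' {G : Type*} [Group G] (g : G) : IsCyclic (Subgroup.zpowers g) := by
  refine ⟨⟨⟨g, Subgroup.mem_zpowers g⟩, fun x => ?_⟩⟩
  obtain ⟨k, hk⟩ := Subgroup.mem_zpowers_iff.mp x.2
  exact Subgroup.mem_zpowers_iff.mpr ⟨k, Subtype.ext (by simpa using hk)⟩

lemma zpowers_eq_of_le_of_orderOf_eq {G : Type*} [Group G] [Finite G] {a b : G}
    (h : a ∈ Subgroup.zpowers b) (ho : orderOf b ≤ orderOf a) :
    Subgroup.zpowers a = Subgroup.zpowers b :=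
  Subgroup.eq_of_le_of_card_ge (Subgroup.zpowers_le.mpr h)
    (by simpa [Nat.card_zpowers] using ho)

-- count generators of zpowers g₀
lemma card_filter_zpowers_eq {G : Type*} [Group G] [Finite G] [Fintype G] [DecidableEq (Subgroup G)]
    (g₀ : G) :
    (Finset.univ.filter fun g : G => Subgroup.zpowers g = Subgroup.zpowers g₀).card
      = Nat.totient (orderOf g₀) := by
  classical
  haveI : IsCyclic (Subgroup.zpowers g₀) := isCyclic_zpowers' g₀
  rw [← Fintype.card_subtype]
  have e : {g : G // Subgroup.zpowers g = Subgroup.zpowers g₀}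
      ≃ {x : Subgroup.zpowers g₀ // orderOf x = orderOf g₀} := by
    refine ⟨fun g => ⟨⟨g.1, Subgroup.zpowers_le.mp g.2.le⟩, ?_⟩,
      fun x => ⟨x.1.1, zpowers_eq_of_le_of_orderOf_eq x.1.2
        (by rw [Subgroup.orderOf_coe, x.2])⟩, fun g => rfl, fun x => rfl⟩
    rw [Subgroup.orderOf_mk, ← Nat.card_zpowers, g.2, Nat.card_zpowers]
  rw [Fintype.card_congr e]
  rw [Fintype.card_subtype]
  have := IsCyclic.card_orderOf_eq_totient (α := Subgroup.zpowers g₀)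
    (d := orderOf g₀) (by rw [← Nat.card_eq_fintype_card, Nat.card_zpowers])
  simpa using this

/-- With the hypotheses of the lemma on nontrivial `p`-power elements that are not
CC-generators: if the maximum-order closed-twin `y` of `v` in `Γ_v` has order `p^j`
with `j ≥ 2`, then `p` divides `|N_Γ[v]|`. -/
theorem p_dvd_card_closedNbhd_of_pPower_non_ccGenerator
    {G : Type*} [Group G] [Finite G] (v : G) (p i : ℕ)
    (hp : p.Prime) (hi : 1 ≤ i) (hv : orderOf v = p ^ i)
    (hncc : ¬ IsCCGenerator v)
    (hdeg : ∀ u : G, ∀ hu : u ∈ closedNbhd (powGraph G) v, orderOf v < orderOf u →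
      closedNbhd (powLocal G v) ⟨u, hu⟩ =
        closedNbhd (powLocal G v) ⟨v, self_mem_closedNbhd _ v⟩ →
      ((powGraph G).neighborSet u).ncard ≤ ((powGraph G).neighborSet v).ncard)
    (y : G) (hy : y ∈ closedNbhd (powGraph G) v)
    (hytwin : closedNbhd (powLocal G v) ⟨y, hy⟩ =
      closedNbhd (powLocal G v) ⟨v, self_mem_closedNbhd _ v⟩)
    (hymax : ∀ z : G, ∀ hz : z ∈ closedNbhd (powGraph G) v,
      closedNbhd (powLocal G v) ⟨z, hz⟩ =
        closedNbhd (powLocal G v) ⟨v, self_mem_closedNbhd _ v⟩ →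
      orderOf z ≤ orderOf y)
    (j : ℕ) (hj : 2 ≤ j) (hyo : orderOf y = p ^ j) :
    p ∣ (closedNbhd (powGraph G) v).ncard := by
  
  classical
  haveI := Fintype.ofFinite G
  -- characterize the closed neighborhood
  have hmemN : ∀ g : G, g ∈ closedNbhd (powGraph G) v ↔
      (g ∈ Subgroup.zpowers v ∨ Subgroup.zpowers v < Subgroup.zpowers g) := by
    intro g
    constructor
    · rintro (rfl | ⟨hne, h⟩)
      · exact Or.inl (Subgroup.mem_zpowers _)
      · by_cases hg : g ∈ Subgroup.zpowers v
        · exact Or.inl hg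
        · rcases h with hvg | hgv
          · refine Or.inr (lt_of_le_of_ne (Subgroup.zpowers_le.mpr hvg) (fun he => hg ?_))
            rw [he]; exact Subgroup.mem_zpowers g
          · exact absurd hgv hg
    · rintro (hg | hlt)
      · by_cases he : g = v
        · rw [he]; exact self_mem_closedNbhd _ v
        · exact Or.inr ⟨fun h => he h.symm, Or.inr hg⟩
      · have hv' : v ∈ Subgroup.zpowers g := hlt.le (Subgroup.mem_zpowers v)
        have hne : v ≠ g := by rintro rfl; exact lt_irrefl _ hlt
        exact Or.inr ⟨hne, Or.inl hv'⟩
  -- twin key lemma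
  have key : ∀ g : G, Subgroup.zpowers v < Subgroup.zpowers g → p ^ 2 ∣ orderOf g := by
    intro g hlt
    have hgN : g ∈ closedNbhd (powGraph G) v := (hmemN g).mpr (Or.inr hlt)
    have h1 : (⟨g, hgN⟩ : closedNbhd (powGraph G) v) ∈
        closedNbhd (powLocal G v) ⟨v, self_mem_closedNbhd _ v⟩ := by
      rcases hgN with heq | hadj
      · exact absurd (congrArg Subgroup.zpowers heq) (by intro h; rw [h] at hlt; exact lt_irrefl _ hlt)
      · exact Or.inr hadj
    rw [← hytwin] at h1
    rcases h1 with heq | hadj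
    · have : g = y := congrArg Subtype.val heq
      rw [this, hyo]
      exact pow_dvd_pow p hj
    · obtain ⟨hne, hcase⟩ := hadj
      rcases hcase with hyg | hgy
      · exact dvd_trans (pow_dvd_pow p hj) (hyo ▸ orderOf_dvd_of_mem_zpowers hyg)
      · -- g ∈ zpowers y, so orderOf g = p ^ k with k > i ≥ 1
        have hdvd : orderOf g ∣ p ^ j := hyo ▸ orderOf_dvd_of_mem_zpowers hgy
        obtain ⟨k, hkj, hk⟩ := (Nat.dvd_prime_pow hp).mp hdvd
        have hvd : orderOf v ∣ orderOf g :=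
          orderOf_dvd_of_mem_zpowers (hlt.le (Subgroup.mem_zpowers v))
        have hne' : orderOf v ≠ orderOf g := by
          intro he
          exact absurd (zpowers_eq_of_le_of_orderOf_eq (hlt.le (Subgroup.mem_zpowers v)) he.ge) hlt.ne
        have hik : i < k := by
          rw [hv, hk] at hvd hne'
          have h1 := (Nat.pow_dvd_pow_iff_le_right hp.one_lt).mp hvd
          have h2 : i ≠ k := fun h => hne' (by rw [h])
          omega
        rw [hk]
        exact pow_dvd_pow p (by omega)
  -- now count
  set A : Finset G := Finset.univ.filter (fun g => g ∈ Subgroup.zpowers v) with hA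
  set B : Finset G := Finset.univ.filter (fun g => Subgroup.zpowers v < Subgroup.zpowers g) with hB
  have hset : closedNbhd (powGraph G) v = ↑(A ∪ B) := by
    ext g
    simp only [hA, hB, Finset.coe_union, Set.mem_union, Finset.coe_filter, Set.mem_setOf_eq,
      Finset.mem_univ, true_and]
    exact hmemN g
  have hdisj : Disjoint A B := by
    rw [Finset.disjoint_left]
    intro a ha hb
    rw [hA, Finset.mem_filter] at ha
    rw [hB, Finset.mem_filter] at hb
    exact absurd (lt_of_lt_of_le hb.2 (Subgroup.zpowers_le.mpr ha.2)) (lt_irrefl _)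
  rw [hset, Set.ncard_coe_finset, Finset.card_union_of_disjoint hdisj]
  apply dvd_add
  · have hAcard : A.card = orderOf v := by
      rw [← Nat.card_zpowers, Nat.card_eq_fintype_card, ← Fintype.card_subtype]
    rw [hAcard, hv]
    exact dvd_pow_self p (by omega)
  · rw [Finset.card_eq_sum_card_image (fun g => Subgroup.zpowers g) B]
    apply Finset.dvd_sum
    intro C hC
    obtain ⟨g₀, hg₀, rfl⟩ := Finset.mem_image.mp hC
    have hg₀B : Subgroup.zpowers v < Subgroup.zpowers g₀ := by
      rw [hB, Finset.mem_filter] at hg₀; exact hg₀.2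
    have hfilter : (B.filter fun g => Subgroup.zpowers g = Subgroup.zpowers g₀)
        = Finset.univ.filter fun g : G => Subgroup.zpowers g = Subgroup.zpowers g₀ := by
      ext g
      constructor
      · intro h
        exact Finset.mem_filter.mpr ⟨Finset.mem_univ g, (Finset.mem_filter.mp h).2⟩
      · intro h
        have h2 := (Finset.mem_filter.mp h).2
        refine Finset.mem_filter.mpr ⟨?_, h2⟩
        rw [hB, Finset.mem_filter]
        exact ⟨Finset.mem_univ g, by rw [h2]; exact hg₀B⟩
    rw [hfilter, card_filter_zpowers_eq g₀]
    refine dvd_trans ?_ (Nat.totient_dvd_of_dvd (key g₀ hg₀B))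
    rw [Nat.totient_prime_pow hp (by norm_num)]
    simp
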